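/- Let φ = (−1 + i√7)/2 ∈ ℂ. Then for every natural number n, 2ⁿ + 2·Re(φⁿ) > 0. Consequently every Taylor coefficient at 0 of the function h(t) = (t+2)/(2t²+t+1) + 1/(1−2t) is strictly positive (h is samo). -/

import Mathlib

open scoped NNReal ENNReal

/-- `φ = (-1 + i√7)/2`, a root of `z² + z + 2 = 0`. -/
noncomputable def φ : ℂ := (-1 + Complex.I * Real.sqrt 7) / 2

/-- The function `h(t) = (t+2)/(2t²+t+1) + 1/(1-2t)`. -/
noncomputable def h (t : ℝ) : ℝ := (t + 2) / (2 * t ^ 2 + t + 1) + 1 / (1 - 2 * t)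

lemma phi_re : φ.re = -1/2 := by simp [φ]
lemma phi_im : φ.im = Real.sqrt 7 / 2 := by simp [φ]
lemma phi_conj : (starRingEnd ℂ) φ = (-1 - Complex.I * Real.sqrt 7) / 2 := by
  apply Complex.ext <;> simp [phi_re, phi_im] <;> ring
lemma sqrt7_sq : (Real.sqrt 7) ^ 2 = 7 := Real.sq_sqrt (by norm_num)
lemma phi_add : φ + (starRingEnd ℂ) φ = -1 := by rw [phi_conj]; simp [φ]; ring
lemma phi_mul : φ * (starRingEnd ℂ) φ = 2 := by
  rw [phi_conj]
  have hC : ((Real.sqrt 7 : ℝ) : ℂ)^2 = 7 := by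
    rw [← Complex.ofReal_pow, sqrt7_sq]; norm_num
  simp only [φ]
  linear_combination (-(((Real.sqrt 7:ℝ):ℂ))^2/4) * Complex.I_sq + (1/4) * hC

lemma phi_normSq : Complex.normSq φ = 2 := by
  rw [Complex.normSq_apply, phi_re, phi_im]
  nlinarith [sqrt7_sq]

lemma phi_abs : ‖φ‖ = Real.sqrt 2 := by
  rw [Complex.norm_def, phi_normSq]

lemma denom_pos (t : ℝ) : 0 < 2 * t ^ 2 + t + 1 := by nlinarith [sq_nonneg (2*t+1)]

lemma denom_factor (z : ℂ) : (1 - φ * z) * (1 - (starRingEnd ℂ) φ * z) = 2 * z ^ 2 + z + 1 := by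
  linear_combination (-z) * phi_add + z^2 * phi_mul

lemma factor_ne (t : ℝ) : (1 - φ * t) ≠ 0 ∧ (1 - (starRingEnd ℂ) φ * t) ≠ 0 := by
  have hp : (1 - φ * t) * (1 - (starRingEnd ℂ) φ * t) ≠ 0 := by
    rw [denom_factor]
    have h := denom_pos t
    intro hc
    have : ((2 * t ^ 2 + t + 1 : ℝ) : ℂ) = 0 := by push_cast; linear_combination hc
    exact absurd (Complex.ofReal_eq_zero.mp this) (ne_of_gt h)
  exact ⟨left_ne_zero_of_mul hp, right_ne_zero_of_mul hp⟩

lemma key_identity (t : ℝ) :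
    (1 - φ * t)⁻¹ + (1 - (starRingEnd ℂ) φ * t)⁻¹ = (((t + 2) / (2 * t ^ 2 + t + 1) : ℝ) : ℂ) := by
  obtain ⟨ha, hb⟩ := factor_ne t
  rw [inv_add_inv ha hb, denom_factor]
  have hsum : (1 - φ * t) + (1 - (starRingEnd ℂ) φ * t) = 2 + t := by
    linear_combination (-(t:ℂ)) * phi_add
  rw [hsum]
  have hden : ((2 * t ^ 2 + t + 1 : ℝ) : ℂ) ≠ 0 :=
    Complex.ofReal_ne_zero.mpr (ne_of_gt (denom_pos t))
  push_cast
  push_cast at hden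
  field_simp
  ring

noncomputable def c : ℕ → ℝ := fun n => 2 ^ n + 2 * (φ ^ n).re

lemma re_abs_bound (n : ℕ) : |(φ ^ n).re| ≤ (Real.sqrt 2) ^ n := by
  have h1 : |(φ ^ n).re| ≤ ‖φ ^ n‖ := Complex.abs_re_le_norm _
  rwa [norm_pow, phi_abs] at h1

lemma sqrt2_le_two : Real.sqrt 2 ≤ 2 := by
  nlinarith [Real.sq_sqrt (by norm_num : (0:ℝ) ≤ 2), Real.sqrt_nonneg 2]

lemma coeff_bound (n : ℕ) : |c n| ≤ 3 * 2 ^ n := by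
  have h5 : |(φ ^ n).re| ≤ 2 ^ n :=
    (re_abs_bound n).trans (pow_le_pow_left₀ (Real.sqrt_nonneg 2) sqrt2_le_two n)
  have h6 := abs_le.mp h5
  have h4 : (0:ℝ) < 2 ^ n := by positivity
  rw [abs_le]
  constructor <;> simp only [c] <;> nlinarith [h6.1, h6.2]

noncomputable def p : FormalMultilinearSeries ℝ ℝ ℝ := FormalMultilinearSeries.ofScalars ℝ c

lemma hball : HasFPowerSeriesOnBall h p 0 ((1/4 : ℝ≥0) : ℝ≥0∞) := by
  constructor
  · apply FormalMultilinearSeries.le_radius_of_bound (C := 3)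
    intro n
    have hnorm : ‖p n‖ ≤ |c n| := by
      rw [p, FormalMultilinearSeries.ofScalars]
      calc ‖c n • ContinuousMultilinearMap.mkPiAlgebraFin ℝ n ℝ‖
          ≤ |c n| * ‖ContinuousMultilinearMap.mkPiAlgebraFin ℝ n ℝ‖ := by
            simpa [Real.norm_eq_abs] using
              norm_smul_le (c n) (ContinuousMultilinearMap.mkPiAlgebraFin ℝ n ℝ)
        _ ≤ |c n| := by rw [ContinuousMultilinearMap.norm_mkPiAlgebraFin, mul_one]
    calc ‖p n‖ * ((1/4 : ℝ≥0) : ℝ) ^ n ≤ (3 * 2 ^ n) * (1/4 : ℝ) ^ n := by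
          apply mul_le_mul (hnorm.trans (coeff_bound n)) (by norm_num)
            (by positivity) (by positivity)
      _ = 3 * (1/2 : ℝ) ^ n := by rw [mul_assoc, ← mul_pow]; norm_num
      _ ≤ 3 * 1 := by
          have : (1/2 : ℝ) ^ n ≤ 1 := pow_le_one₀ (by norm_num) (by norm_num)
          linarith
      _ = 3 := by norm_num
  · norm_num
  · intro y hy
    have hy' : |y| < 1/4 := by
      have h1 := mem_emetric_ball_zero_iff.mp hy
      have h2 : ‖y‖₊ < (1/4 : ℝ≥0) := by exact_mod_cast h1
      rw [← Real.norm_eq_abs, ← coe_nnnorm]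
      exact_mod_cast h2
    have hgr : HasSum (fun n : ℕ => (2 * y) ^ n) (1 - 2 * y)⁻¹ := by
      apply hasSum_geometric_of_norm_lt_one
      rw [Real.norm_eq_abs, abs_mul, abs_two]
      linarith [abs_nonneg y]
    have hnφ : ‖φ * (y : ℂ)‖ < 1 := by
      rw [norm_mul, phi_abs, Complex.norm_real, Real.norm_eq_abs]
      nlinarith [sqrt2_le_two, Real.sqrt_nonneg 2, abs_nonneg y]
    have hnφ' : ‖(starRingEnd ℂ) φ * (y : ℂ)‖ < 1 := by
      rwa [norm_mul, RCLike.norm_conj, ← norm_mul]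
    have hg1 : HasSum (fun n : ℕ => (φ * y) ^ n) (1 - φ * y)⁻¹ :=
      hasSum_geometric_of_norm_lt_one hnφ
    have hg2 : HasSum (fun n : ℕ => ((starRingEnd ℂ) φ * y) ^ n)
        (1 - (starRingEnd ℂ) φ * y)⁻¹ := hasSum_geometric_of_norm_lt_one hnφ'
    have hgc := (hg1.add hg2).mapL Complex.reCLM
    have hterm : (fun n : ℕ => Complex.reCLM ((φ * (y:ℂ)) ^ n + ((starRingEnd ℂ) φ * (y:ℂ)) ^ n))
        = fun n => 2 * (φ ^ n).re * y ^ n := by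
      funext n
      simp only [Complex.reCLM_apply, Complex.add_re, mul_pow, ← map_pow,
        ← Complex.ofReal_pow, Complex.mul_re, Complex.ofReal_re, Complex.ofReal_im,
        Complex.conj_re, Complex.conj_im]
      ring
    have hval : Complex.reCLM ((1 - φ * (y:ℂ))⁻¹ + (1 - (starRingEnd ℂ) φ * (y:ℂ))⁻¹)
        = (y + 2) / (2 * y ^ 2 + y + 1) := by
      rw [Complex.reCLM_apply, key_identity y, Complex.ofReal_re]
    rw [hterm, hval] at hgc
    have htotal := hgr.add hgc
    have heq : (fun n : ℕ => p n fun _ => y)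
        = fun n : ℕ => (2 * y) ^ n + 2 * (φ ^ n).re * y ^ n := by
      funext n
      rw [p, FormalMultilinearSeries.ofScalars_apply_eq]
      simp only [c, smul_eq_mul, mul_pow]
      ring
    rw [heq, zero_add, show h y = (1 - 2*y)⁻¹ + (y + 2)/(2*y^2 + y + 1) by
      rw [h, one_div, add_comm]]
    exact htotal

/-- `2ⁿ + 2 Re(φⁿ) > 0` for every `n`; consequently every Taylor coefficient of
    `h(t) = (t+2)/(2t²+t+1) + 1/(1-2t)` at `0` is strictly positive (`h` is samo). -/
theorem h_is_samo :
    (∀ n : ℕ, 0 < (2 : ℝ) ^ n + 2 * (φ ^ n).re) ∧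
    (∀ n : ℕ, 0 < iteratedDeriv n h 0 / n.factorial) := by
  have part1 : ∀ n : ℕ, 0 < (2 : ℝ) ^ n + 2 * (φ ^ n).re := by
    intro n
    match n with
    | 0 => norm_num
    | 1 => simp [phi_re]; norm_num
    | 2 =>
      have : (φ ^ 2).re = -3/2 := by
        rw [pow_two, Complex.mul_re, phi_re, phi_im]
        nlinarith [sqrt7_sq]
      rw [this]; norm_num
    | (m + 3) =>
      set n := m + 3
      have hb := re_abs_bound n
      have hs2 : (1:ℝ) < Real.sqrt 2 := by
        nlinarith [Real.sq_sqrt (by norm_num : (0:ℝ) ≤ 2), Real.sqrt_nonneg 2]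
      have h2n : (2:ℝ) ^ n = (Real.sqrt 2) ^ n * (Real.sqrt 2) ^ n := by
        rw [← mul_pow]
        congr 1
        nlinarith [Real.sq_sqrt (by norm_num : (0:ℝ) ≤ 2)]
      have hgt : (2:ℝ) < (Real.sqrt 2) ^ n := by
        have h3 : (Real.sqrt 2) ^ 3 ≤ (Real.sqrt 2) ^ n :=
          pow_le_pow_right₀ (le_of_lt hs2) (by omega)
        have : (2:ℝ) < (Real.sqrt 2) ^ 3 := by
          nlinarith [Real.sq_sqrt (by norm_num : (0:ℝ) ≤ 2), Real.sqrt_nonneg 2]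
        linarith
      have := abs_le.mp hb
      nlinarith [this.1, pow_pos (lt_trans one_pos hs2) n]
  refine ⟨part1, fun n => ?_⟩
  have hd : iteratedDeriv n h 0 = n.factorial * c n := by
    have hf := hball.factorial_smul (1 : ℝ) n
    rw [iteratedDeriv_eq_iteratedFDeriv, ← hf, p, FormalMultilinearSeries.ofScalars_apply_eq]
    simp
  rw [hd]
  have hfac : (0:ℝ) < n.factorial := by exact_mod_cast n.factorial_pos
  have hc : 0 < c n := part1 n
  positivity
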